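/- arXiv:1005.0150 — 3 statements merged into one kernel-verified Lean document; each statement's English description precedes it below -/
import Mathlib

section
/- Let I = { (s,I)_{s∈ℝ} } be a consistent family of increment processes: each ˢI is adapted càdlàg with ˢI_t = 0 a.s. for t ≤ s, and ˢI_t + ᵗI_u = ˢI_u a.s. for s ≤ t ≤ u. Then there exists a càdlàg process X = (X_t)_{t∈ℝ} with X_t − X_{t∧s} = ˢI_t (up to indistinguishability in t) for every s; moreover any two such processes differ by a single random variable a.s. -/
open MeasureTheory Filter Set

noncomputable section

variable {Ω : Type*}

/-- The increment of the process `M` over the interval `(s, ·]`:  `ˢM_t = M_t - M_{t ∧ s}`. -/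
def incr (M : ℝ → Ω → ℝ) (s t : ℝ) (ω : Ω) : ℝ := M t ω - M (min t s) ω

/-- A real function is càdlàg : right-continuous with left limits. -/
def Cadlag (f : ℝ → ℝ) : Prop :=
  (∀ t, ContinuousWithinAt f (Set.Ici t) t) ∧
    ∀ t : ℝ, ∃ l, Tendsto f (nhdsWithin t (Set.Iio t)) (nhds l)

/-- The jump `ΔM_t(ω) = M_t(ω) - M_{t-}(ω)`. -/
def jump (M : ℝ → Ω → ℝ) (ω : Ω) (t : ℝ) : ℝ :=
  M t ω - Function.leftLim (fun u => M u ω) t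

/-- A filtration indexed by `ℝ` is right-continuous. -/
def RightContinuousFiltration {m : MeasurableSpace Ω} (ℱ : Filtration ℝ m) : Prop :=
  ∀ t : ℝ, (ℱ t : MeasurableSpace Ω) = ⨅ (u : ℝ) (_ : t < u), (ℱ u : MeasurableSpace Ω)

/-- Each `ℱ t` contains all `μ`-null sets. -/
def CompleteFiltration {m : MeasurableSpace Ω} (ℱ : Filtration ℝ m) (μ : Measure Ω) : Prop :=
  ∀ (t : ℝ) (s : Set Ω), μ s = 0 → MeasurableSet[ℱ t] s

/-- A martingale in the sense of the paper: adapted, integrable, with the martingale property. -/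
def IsMart {m : MeasurableSpace Ω} (ℱ : Filtration ℝ m) (μ : Measure Ω) (M : ℝ → Ω → ℝ) : Prop :=
  Martingale M ℱ μ ∧ ∀ t, Integrable (M t) μ

/-- A square integrable martingale. -/
def IsSqMart {m : MeasurableSpace Ω} (ℱ : Filtration ℝ m) (μ : Measure Ω)
    (M : ℝ → Ω → ℝ) : Prop :=
  IsMart ℱ μ M ∧ ∀ t, MemLp (M t) 2 μ

/-- An increment martingale: a càdlàg process all of whose increment processes are
martingales. -/
def IsIncMart {m : MeasurableSpace Ω} (ℱ : Filtration ℝ m) (μ : Measure Ω)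
    (M : ℝ → Ω → ℝ) : Prop :=
  (∀ ω, Cadlag fun t => M t ω) ∧ ∀ s : ℝ, IsMart ℱ μ (incr M s)

/-- An increment square integrable martingale. -/
def IsIncSqMart {m : MeasurableSpace Ω} (ℱ : Filtration ℝ m) (μ : Measure Ω)
    (M : ℝ → Ω → ℝ) : Prop :=
  (∀ ω, Cadlag fun t => M t ω) ∧ ∀ s : ℝ, IsSqMart ℱ μ (incr M s)

/-- The process `M` stopped at the (finite) random time `τ`. -/
def stopped (M : ℝ → Ω → ℝ) (τ : Ω → ℝ) : ℝ → Ω → ℝ := fun t ω => M (min t (τ ω)) ω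

/-- A localizing sequence of real-valued stopping times. -/
def Localizing {m : MeasurableSpace Ω} (ℱ : Filtration ℝ m) (μ : Measure Ω)
    (σ : ℕ → Ω → ℝ) : Prop :=
  (∀ n, IsStoppingTime ℱ (fun ω => ((σ n ω : ℝ) : WithTop ℝ))) ∧ (∀ ω, Monotone fun n => σ n ω) ∧
    ∀ᵐ ω ∂μ, Tendsto (fun n => σ n ω) atTop atTop

/-- A local martingale indexed by `ℝ`. -/
def IsLocalMart {m : MeasurableSpace Ω} (ℱ : Filtration ℝ m) (μ : Measure Ω)
    (M : ℝ → Ω → ℝ) : Prop :=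
  ∃ σ : ℕ → Ω → ℝ, Localizing ℱ μ σ ∧ ∀ n, IsMart ℱ μ (stopped M (σ n))

/-- A locally square integrable martingale indexed by `ℝ`. -/
def IsLocSqMart {m : MeasurableSpace Ω} (ℱ : Filtration ℝ m) (μ : Measure Ω)
    (M : ℝ → Ω → ℝ) : Prop :=
  ∃ σ : ℕ → Ω → ℝ, Localizing ℱ μ σ ∧ ∀ n, IsSqMart ℱ μ (stopped M (σ n))

/-- An increment local martingale: every increment process is adapted and a local
martingale (with a localizing sequence possibly depending on `s`). -/
def IsIncLocalMart {m : MeasurableSpace Ω} (ℱ : Filtration ℝ m) (μ : Measure Ω)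
    (M : ℝ → Ω → ℝ) : Prop :=
  (∀ ω, Cadlag fun t => M t ω) ∧
    ∀ s : ℝ, Adapted ℱ (incr M s) ∧ IsLocalMart ℱ μ (incr M s)

/-- An increment locally square integrable martingale. -/
def IsIncLocSqMart {m : MeasurableSpace Ω} (ℱ : Filtration ℝ m) (μ : Measure Ω)
    (M : ℝ → Ω → ℝ) : Prop :=
  (∀ ω, Cadlag fun t => M t ω) ∧
    ∀ s : ℝ, Adapted ℱ (incr M s) ∧ IsLocSqMart ℱ μ (incr M s)

/-- A stopping time with values in `(-∞, ∞]` (encoded in `EReal`, `⊥` excluded separately). -/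
def IsStoppingTimeE {m : MeasurableSpace Ω} (ℱ : Filtration ℝ m) (τ : Ω → EReal) : Prop :=
  ∀ t : ℝ, MeasurableSet[ℱ t] {ω | τ ω ≤ (t : EReal)}

/-- The process `M` stopped at the `EReal`-valued random time `τ`. -/
def stoppedE (M : ℝ → Ω → ℝ) (τ : Ω → EReal) : ℝ → Ω → ℝ :=
  fun t ω => M ((min (t : EReal) (τ ω)).toReal) ω

/-- The process `M`, extended to `-∞` by `Z` and stopped at the `EReal`-valued time `τ`,
as a process indexed by `EReal` (only the values on `[-∞, ∞)` are relevant). -/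
def stopE' (M : ℝ → Ω → ℝ) (Z : Ω → ℝ) (τ : Ω → EReal) (t : EReal) (ω : Ω) : ℝ :=
  if min t (τ ω) = ⊥ then Z ω else M ((min t (τ ω)).toReal) ω

/-- The filtration extended to the index `-∞` by `ℱ_{-∞} = ⨅ t, ℱ t`. -/
def FE {m : MeasurableSpace Ω} (ℱ : Filtration ℝ m) (t : EReal) : MeasurableSpace Ω :=
  if t = ⊥ then ⨅ u : ℝ, (ℱ u : MeasurableSpace Ω) else ℱ t.toReal

/-- A martingale indexed by `[-∞, ∞)` with respect to the extended filtration. -/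
def IsMartE {m : MeasurableSpace Ω} (ℱ : Filtration ℝ m) (μ : Measure Ω)
    (N : EReal → Ω → ℝ) : Prop :=
  (∀ t : EReal, t ≠ ⊤ → StronglyMeasurable[FE ℱ t] (N t)) ∧
  (∀ t : EReal, t ≠ ⊤ → Integrable (N t) μ) ∧
  ∀ s t : EReal, s ≤ t → t ≠ ⊤ → μ[N t | FE ℱ s] =ᵐ[μ] N s

/-- The predictable σ-algebra on `ℝ × Ω`, generated by the simple predictable sets
`B × C` with `C ∈ ℱ t` and `B ⊆ (t, ∞)` a bounded Borel set. -/
def predictableSigma {m : MeasurableSpace Ω} (ℱ : Filtration ℝ m) :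
    MeasurableSpace (ℝ × Ω) :=
  MeasurableSpace.generateFrom
    {A | ∃ (t : ℝ) (B : Set ℝ) (C : Set Ω), B ⊆ Set.Ioi t ∧ MeasurableSet B ∧
      Bornology.IsBounded B ∧ MeasurableSet[ℱ t] C ∧ A = B ×ˢ C}

/-- A predictable process. -/
def PredictableProc {m : MeasurableSpace Ω} (ℱ : Filtration ℝ m) (X : ℝ → Ω → ℝ) : Prop :=
  @Measurable (ℝ × Ω) ℝ (predictableSigma ℱ) _ fun p => X p.1 p.2

/-- The process `X` is associated with the family of increment processes `I`. -/
def Assoc {m : MeasurableSpace Ω} (μ : Measure Ω) (I : ℝ → ℝ → Ω → ℝ) (X : ℝ → Ω → ℝ) : Prop :=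
  ∀ s : ℝ, ∀ᵐ ω ∂μ, ∀ t, X t ω - X (min t s) ω = I s t ω

/-- `V` is a quadratic variation of the increment local martingale `M`:
`V ∈ A₀(ℱ)`, `ΔV = (ΔM)²` and `(ˢM)² - ˢV` is a local martingale for every `s`. -/
def IsQuadVar {m : MeasurableSpace Ω} (ℱ : Filtration ℝ m) (μ : Measure Ω)
    (M V : ℝ → Ω → ℝ) : Prop :=
  (∀ ω, Monotone fun t => V t ω) ∧ (∀ ω, Cadlag fun t => V t ω) ∧ Adapted ℱ V ∧
  (∀ᵐ ω ∂μ, Tendsto (fun t => V t ω) atBot (nhds 0)) ∧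
  (∀ᵐ ω ∂μ, ∀ t, jump V ω t = (jump M ω t) ^ 2) ∧
  ∀ s : ℝ, IsLocalMart ℱ μ fun t ω => (incr M s t ω) ^ 2 - incr V s t ω

/-- `V` is a predictable quadratic variation of `M`: an increasing predictable càdlàg
adapted locally integrable process with `V_{-∞} = 0` a.s. such that `(ˢM)² - ˢV` is a
local martingale for every `s`. -/
def IsPredQV {m : MeasurableSpace Ω} (ℱ : Filtration ℝ m) (μ : Measure Ω)
    (M V : ℝ → Ω → ℝ) : Prop :=
  (∀ ω, Monotone fun t => V t ω) ∧ (∀ ω, Cadlag fun t => V t ω) ∧ Adapted ℱ V ∧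
  PredictableProc ℱ V ∧
  (∀ᵐ ω ∂μ, Tendsto (fun t => V t ω) atBot (nhds 0)) ∧
  (∃ σ : ℕ → Ω → ℝ, Localizing ℱ μ σ ∧ ∀ n t, Integrable (stopped V (σ n) t) μ) ∧
  ∀ s : ℝ, IsLocalMart ℱ μ fun t ω => (incr M s t ω) ^ 2 - incr V s t ω

/-- `Mc` is a continuous martingale component of the increment local martingale `M`:
it is continuous, its increments are adapted local martingales, and the increments of
`M - Mc` are purely discontinuous local martingales (orthogonal to every continuous
local martingale vanishing at `-∞`). -/
def IsContMartPart {m : MeasurableSpace Ω} (ℱ : Filtration ℝ m) (μ : Measure Ω)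
    (M Mc : ℝ → Ω → ℝ) : Prop :=
  (∀ ω, Continuous fun t => Mc t ω) ∧
  (∀ s : ℝ, Adapted ℱ (incr Mc s)) ∧
  (∀ s : ℝ, IsLocalMart ℱ μ (incr Mc s)) ∧
  (∀ s : ℝ, IsLocalMart ℱ μ fun t ω => incr M s t ω - incr Mc s t ω) ∧
  ∀ s : ℝ, ∀ N : ℝ → Ω → ℝ, (∀ ω, Continuous fun t => N t ω) → IsLocalMart ℱ μ N →
    (∀ᵐ ω ∂μ, Tendsto (fun t => N t ω) atBot (nhds 0)) →
    IsLocalMart ℱ μ fun t ω => (incr M s t ω - incr Mc s t ω) * N t ω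

/-- The Lebesgue–Stieltjes measure on `ℝ` induced by the (pathwise increasing,
right-continuous) process `V` at the outcome `ω`. -/
def stj (V : ℝ → Ω → ℝ) (hm : ∀ ω, Monotone fun t => V t ω)
    (hrc : ∀ ω t, ContinuousWithinAt (fun u => V u ω) (Set.Ici t) t) (ω : Ω) : Measure ℝ :=
  StieltjesFunction.measure ⟨fun t => V t ω, hm ω, hrc ω⟩

end

section Aux

open MeasureTheory Filter Set

/-- Two right-continuous functions agreeing on the rationals agree everywhere. -/
lemma rc_eq {f g : ℝ → ℝ}
    (hf : ∀ t, ContinuousWithinAt f (Set.Ici t) t)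
    (hg : ∀ t, ContinuousWithinAt g (Set.Ici t) t)
    (h : ∀ q : ℚ, f q = g q) (t : ℝ) : f t = g t := by
  choose q hq1 hq2 using fun n : ℕ => exists_rat_btwn
    (show t < t + 1/((n:ℝ)+1) by
      have : (0:ℝ) < 1/((n:ℝ)+1) := by positivity
      linarith)
  have hten : Tendsto (fun n => (q n : ℝ)) atTop (nhds t) := by
    apply tendsto_of_tendsto_of_tendsto_of_le_of_le (g := fun _ : ℕ => t)
      (h := fun n : ℕ => t + 1/((n:ℝ)+1)) tendsto_const_nhds ?_
      (fun n => (hq1 n).le) (fun n => (hq2 n).le)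
    simpa using (tendsto_const_nhds (x := t)).add (tendsto_one_div_add_atTop_nhds_zero_nat : Tendsto (fun n : ℕ => 1 / ((n : ℝ) + 1)) atTop (nhds 0))
  have hmem : Tendsto (fun n => (q n : ℝ)) atTop (nhdsWithin t (Set.Ici t)) :=
    tendsto_nhdsWithin_of_tendsto_nhds_of_eventually_within _ hten
      (Filter.Eventually.of_forall fun n => (hq1 n).le)
  have h1 : Tendsto (fun n => f (q n)) atTop (nhds (f t)) := (hf t).tendsto.comp hmem
  have h2 : Tendsto (fun n => f (q n)) atTop (nhds (g t)) :=
    ((hg t).tendsto.comp hmem).congr fun n => (h (q n)).symm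
  exact tendsto_nhds_unique h1 h2

/-- The index of the "piece" containing `t`. -/
noncomputable def nidx (t : ℝ) : ℕ := Nat.ceil (max 0 (-t))

lemma nidx_le (t : ℝ) : -(nidx t : ℝ) ≤ t := by
  have : -t ≤ (nidx t : ℝ) := le_trans (le_max_right 0 (-t)) (Nat.le_ceil _)
  linarith

lemma nidx_anti {a b : ℝ} (h : a ≤ b) : nidx b ≤ nidx a :=
  Nat.ceil_le_ceil (max_le_max le_rfl (neg_le_neg h))

lemma nidx_zero {u : ℝ} (h : 0 ≤ u) : nidx u = 0 := by
  simp [nidx, max_eq_left (by linarith : -u ≤ (0:ℝ))]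

lemma nidx_eq {n : ℕ} {u : ℝ} (h1 : (n:ℝ) - 1 < -u) (h2 : -u ≤ n) : nidx u = n := by
  rcases Nat.eq_zero_or_pos n with hn | hn
  · subst hn
    simp only [Nat.cast_zero] at h2
    simp [nidx, max_eq_left h2]
  · have hn1 : (1:ℝ) ≤ (n:ℝ) := by exact_mod_cast hn
    have hu0 : (0:ℝ) < -u := by linarith
    unfold nidx
    rw [max_eq_right hu0.le, Nat.ceil_eq_iff hn.ne']
    constructor
    · rw [Nat.cast_sub hn, Nat.cast_one]; exact h1
    · exact h2

lemma nidx_right (t : ℝ) : ∃ ε > 0, ∀ u, t ≤ u → u < t + ε → nidx u = nidx t := by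
  by_cases h0 : 0 ≤ t
  · exact ⟨1, one_pos, fun u hu _ => by rw [nidx_zero (le_trans h0 hu), nidx_zero h0]⟩
  · push_neg at h0
    have hpos : 1 ≤ nidx t := by
      rw [nidx, Nat.one_le_ceil_iff]
      exact lt_max_of_lt_right (by linarith)
    have hpos' : (1:ℝ) ≤ (nidx t : ℝ) := by exact_mod_cast hpos
    have hub : t < -(nidx t : ℝ) + 1 := by
      have h := Nat.ceil_lt_add_one (le_max_left 0 (-t))
      have hmax : max 0 (-t) = -t := max_eq_right (by linarith)
      rw [hmax] at h
      have : (nidx t : ℝ) < -t + 1 := by unfold nidx; rw [hmax]; exact h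
      linarith
    refine ⟨-(nidx t : ℝ) + 1 - t, by linarith, fun u hu1 hu2 => ?_⟩
    have hle := nidx_le t
    exact nidx_eq (by linarith) (by linarith)

lemma nidx_left (t : ℝ) : ∃ δ > 0, ∃ m : ℕ, ∀ u, t - δ < u → u < t → nidx u = m := by
  by_cases h0 : 0 < t
  · exact ⟨t, h0, 0, fun u hu1 hu2 => nidx_zero (by linarith)⟩
  · push_neg at h0
    refine ⟨(Nat.floor (-t) : ℝ) + 1 + t, ?_, Nat.floor (-t) + 1, fun u hu1 hu2 => ?_⟩
    · have := Nat.lt_floor_add_one (-t); linarith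
    · have h1 : (Nat.floor (-t):ℝ) ≤ -t := Nat.floor_le (by linarith)
      apply nidx_eq
      · push_cast; linarith
      · push_cast; linarith

/-- Cumulative sum of unit increments on the negative half-line. -/
noncomputable def csum {Ω : Type*} (I : ℝ → ℝ → Ω → ℝ) (n : ℕ) (ω : Ω) : ℝ :=
  ∑ k ∈ Finset.range n, I (-((k:ℝ)+1)) (-(k:ℝ)) ω

end Aux

/-- every consistent family of increment processes admits an associated
càdlàg process, unique up to addition of a single random variable. -/
theorem stmt10 {Ω : Type*} {m : MeasurableSpace Ω} {μ : Measure Ω} [IsProbabilityMeasure μ]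
    (ℱ : Filtration ℝ m) (hrc : RightContinuousFiltration ℱ) (hcpl : CompleteFiltration ℱ μ)
    (I : ℝ → ℝ → Ω → ℝ)
    (hadapt : ∀ s, Adapted ℱ (I s))
    (hIcad : ∀ s ω, Cadlag fun t => I s t ω)
    (hzero : ∀ s t : ℝ, t ≤ s → ∀ᵐ ω ∂μ, I s t ω = 0)
    (hcons : ∀ s t u : ℝ, s ≤ t → t ≤ u → ∀ᵐ ω ∂μ, I s t ω + I t u ω = I s u ω) :
    (∃ X : ℝ → Ω → ℝ, (∀ ω, Cadlag fun t => X t ω) ∧ Assoc μ I X) ∧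
      ∀ X Y : ℝ → Ω → ℝ, (∀ ω, Cadlag fun t => X t ω) → (∀ ω, Cadlag fun t => Y t ω) →
        Assoc μ I X → Assoc μ I Y →
        ∃ Z : Ω → ℝ, ∀ᵐ ω ∂μ, ∀ t, X t ω = Y t ω + Z ω := by
  constructor
  · -- existence
    set X : ℝ → Ω → ℝ := fun t ω => I (-(nidx t : ℝ)) t ω - csum I (nidx t) ω with hXdef
    have hXc : ∀ ω, Cadlag fun t => X t ω := by
      intro ω
      constructor
      · intro t
        obtain ⟨ε, hε, hN⟩ := nidx_right t
        have base : ContinuousWithinAt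
            (fun u => I (-(nidx t:ℝ)) u ω - csum I (nidx t) ω) (Set.Ici t) t :=
          ((hIcad _ ω).1 t).sub continuousWithinAt_const
        apply base.congr_of_eventuallyEq
        · have hmem : Set.Ico t (t+ε) ∈ nhdsWithin t (Set.Ici t) := by
            rw [← Set.Ici_inter_Iio]
            exact Filter.inter_mem self_mem_nhdsWithin
              (mem_nhdsWithin_of_mem_nhds (Iio_mem_nhds (by linarith)))
          filter_upwards [hmem] with u hu
          simp only [X, hN u hu.1 hu.2]
        · simp only [X, hN t le_rfl (by linarith)]
      · intro t
        obtain ⟨δ, hδ, mm, hN⟩ := nidx_left t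
        obtain ⟨l, hl⟩ := (hIcad (-(mm:ℝ)) ω).2 t
        refine ⟨l - csum I mm ω, ?_⟩
        have base : Tendsto (fun u => I (-(mm:ℝ)) u ω - csum I mm ω)
            (nhdsWithin t (Set.Iio t)) (nhds (l - csum I mm ω)) :=
          hl.sub tendsto_const_nhds
        apply base.congr'
        have hmem : Set.Ioo (t-δ) t ∈ nhdsWithin t (Set.Iio t) := by
          rw [← Set.Ioi_inter_Iio]
          exact Filter.inter_mem
            (mem_nhdsWithin_of_mem_nhds (Ioi_mem_nhds (by linarith))) self_mem_nhdsWithin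
        filter_upwards [hmem] with u hu
        simp only [X, hN u hu.1 hu.2]
    refine ⟨X, hXc, ?_⟩
    -- telescoping
    have tele : ∀ n m : ℕ, m ≤ n →
        ∀ᵐ ω ∂μ, I (-(n:ℝ)) (-(m:ℝ)) ω = csum I n ω - csum I m ω := by
      intro n m h
      induction n, h using Nat.le_induction with
      | base =>
        filter_upwards [hzero (-(m:ℝ)) (-(m:ℝ)) le_rfl] with ω h
        simp [h]
      | succ n hn ih =>
        have hnm : -(n:ℝ) ≤ -(m:ℝ) := by
          have : (m:ℝ) ≤ (n:ℝ) := by exact_mod_cast hn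
          linarith
        have h1 := hcons (-((n:ℝ)+1)) (-(n:ℝ)) (-(m:ℝ)) (by linarith) hnm
        filter_upwards [h1, ih] with ω e1 e2
        have hs : csum I (n+1) ω = csum I n ω + I (-((n:ℝ)+1)) (-(n:ℝ)) ω := by
          unfold csum; rw [Finset.sum_range_succ]
        push_cast
        linarith
    -- increment over a fixed interval
    have stepA : ∀ a b : ℝ, a ≤ b → ∀ᵐ ω ∂μ, X b ω - X a ω = I a b ω := by
      intro a b hab
      have hmn : nidx b ≤ nidx a := nidx_anti hab
      have hcast : -(nidx a : ℝ) ≤ -(nidx b : ℝ) := by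
        have : (nidx b : ℝ) ≤ (nidx a : ℝ) := by exact_mod_cast hmn
        linarith
      have h1 := hcons (-(nidx a : ℝ)) a b (nidx_le a) hab
      have h2 := hcons (-(nidx a : ℝ)) (-(nidx b : ℝ)) b hcast (nidx_le b)
      have h3 := tele (nidx a) (nidx b) hmn
      filter_upwards [h1, h2, h3] with ω e1 e2 e3
      simp only [X]
      linarith
    -- association
    intro s
    have key : ∀ t : ℝ, ∀ᵐ ω ∂μ, X t ω - X (min t s) ω = I s t ω := by
      intro t
      rcases le_or_gt t s with hts | hst
      · filter_upwards [hzero s t hts] with ω h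
        rw [min_eq_left hts, h, sub_self]
      · filter_upwards [stepA s t hst.le] with ω h
        rw [min_eq_right hst.le, h]
    have hq : ∀ᵐ ω ∂μ, ∀ q : ℚ, X q ω - X (min (q:ℝ) s) ω = I s q ω :=
      ae_all_iff.2 fun q => key q
    filter_upwards [hq] with ω hω
    refine rc_eq (f := fun t => X t ω - X (min t s) ω) (g := fun t => I s t ω) ?_
      (fun t => (hIcad s ω).1 t) hω
    intro t
    refine ((hXc ω).1 t).sub ?_
    refine ContinuousWithinAt.comp (g := fun u => X u ω) (f := fun u : ℝ => min u s)
      ((hXc ω).1 (min t s))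
      ((continuous_id.min continuous_const).continuousWithinAt) ?_
    exact fun u hu => show min t s ≤ min u s from min_le_min (Set.mem_Ici.mp hu) le_rfl
  · -- uniqueness
    intro X Y hXc hYc hX hY
    refine ⟨fun ω => X 0 ω - Y 0 ω, ?_⟩
    have hqs : ∀ᵐ ω ∂μ, ∀ q : ℚ,
        (∀ t, X t ω - X (min t (q:ℝ)) ω = I q t ω) ∧
        (∀ t, Y t ω - Y (min t (q:ℝ)) ω = I q t ω) :=
      ae_all_iff.2 fun q => (hX q).and (hY q)
    filter_upwards [hqs, hX 0, hY 0] with ω hω hX0 hY0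
    have hrat : ∀ q : ℚ, X q ω = Y q ω + (X 0 ω - Y 0 ω) := by
      intro q
      rcases le_or_gt (q:ℝ) 0 with h | h
      · have e1 := (hω q).1 0
        have e2 := (hω q).2 0
        rw [min_eq_right h] at e1 e2
        linarith
      · have e1 := hX0 q
        have e2 := hY0 q
        rw [min_eq_right h.le] at e1 e2
        linarith
    exact fun t => rc_eq (f := fun u => X u ω)
      (g := fun u => Y u ω + (X 0 ω - Y 0 ω))
      (fun u => (hXc ω).1 u)
      (fun u => ((hYc ω).1 u).add continuousWithinAt_const) hrat t
end

section
/- If X and Y are càdlàg processes indexed by ℝ with identical increments (for every s, the processes (X_t − X_{t∧s})_t and (Y_t − Y_{t∧s})_t are indistinguishable), then there exists a random variable Z such that X_t = Y_t + Z for all t ∈ ℝ almost surely. -/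
open MeasureTheory Filter Set

/-- two càdlàg processes with identical increments differ by a single
random variable almost surely. -/
theorem stmt11 {Ω : Type*} {m : MeasurableSpace Ω} {μ : Measure Ω} [IsProbabilityMeasure μ]
    (X Y : ℝ → Ω → ℝ)
    (hX : ∀ ω, Cadlag fun t => X t ω) (hY : ∀ ω, Cadlag fun t => Y t ω)
    (hinc : ∀ s : ℝ, ∀ᵐ ω ∂μ, ∀ t, X t ω - X (min t s) ω = Y t ω - Y (min t s) ω) :
    ∃ Z : Ω → ℝ, ∀ᵐ ω ∂μ, ∀ t, X t ω = Y t ω + Z ω := by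
  refine ⟨fun ω => X 0 ω - Y 0 ω, ?_⟩
  have h : ∀ᵐ ω ∂μ, ∀ q : ℚ, ∀ t, X t ω - X (min t q) ω = Y t ω - Y (min t q) ω :=
    ae_all_iff.2 fun q => hinc q
  filter_upwards [h] with ω hω t
  obtain ⟨q, hq⟩ := exists_rat_lt (min t 0)
  have hqt : (q : ℝ) ≤ t := hq.le.trans (min_le_left _ _)
  have hq0 : (q : ℝ) ≤ 0 := hq.le.trans (min_le_right _ _)
  have h1 := hω q t
  have h2 := hω q 0
  rw [min_eq_right hqt] at h1
  rw [min_eq_right hq0] at h2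
  linarith
end

section
/- Let I be a consistent family of increment processes and X a càdlàg process associated with I such that X_{−∞} := lim_{t→−∞} X_t exists in probability. Then (X_t − X_{−∞})_{t∈ℝ} is adapted and associated with I; moreover it is the unique (up to indistinguishability) càdlàg process associated with I converging to 0 in probability at −∞. If in addition each ˢI is predictable, then (X_t − X_{−∞})_t is predictable. -/
open MeasureTheory Filter Set

section helperLemmas

open MeasureTheory Filter Set

variable {Ω : Type*} {m : MeasurableSpace Ω} {μ : Measure Ω}

/-- If every outer-null set is `m0`-measurable, then a function a.e. equal to an
`m0`-measurable function is `m0`-measurable. -/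
lemma meas_of_ae_eq_of_null {m0 : MeasurableSpace Ω}
    (hnull : ∀ s : Set Ω, μ s = 0 → MeasurableSet[m0] s)
    {f g : Ω → ℝ} (hg : Measurable[m0] g) (hfg : ∀ᵐ ω ∂μ, f ω = g ω) :
    Measurable[m0] f := by
  have hD : μ {ω | ¬ f ω = g ω} = 0 := ae_iff.mp hfg
  intro B hB
  have h2 : μ (f ⁻¹' B ∩ {ω | ¬ f ω = g ω}) = 0 :=
    le_antisymm ((measure_mono inter_subset_right).trans hD.le) (zero_le)
  have hEq : f ⁻¹' B = (g ⁻¹' B ∩ {ω | ¬ f ω = g ω}ᶜ) ∪ (f ⁻¹' B ∩ {ω | ¬ f ω = g ω}) := by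
    ext ω
    by_cases h : f ω = g ω
    · simp only [Set.mem_union, Set.mem_inter_iff, Set.mem_preimage, Set.mem_compl_iff,
        Set.mem_setOf_eq, h, not_true_eq_false]
      tauto
    · simp only [Set.mem_union, Set.mem_inter_iff, Set.mem_preimage, Set.mem_compl_iff,
        Set.mem_setOf_eq, h, not_false_eq_true]
      tauto
  rw [hEq]
  exact ((hg hB).inter (hnull _ hD).compl).union (hnull _ h2)

/-- An a.e. limit of `m0`-measurable functions is `m0`-measurable when `m0` contains
all outer-null sets. -/
lemma meas_of_tendsto_ae_of_null {m0 : MeasurableSpace Ω} (hle : m0 ≤ m)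
    (hnull : ∀ s : Set Ω, μ s = 0 → MeasurableSet[m0] s)
    {g : ℕ → Ω → ℝ} (hg : ∀ j, Measurable[m0] (g j)) {f : Ω → ℝ}
    (h : ∀ᵐ ω ∂μ, Tendsto (fun j => g j ω) atTop (nhds (f ω))) :
    Measurable[m0] f := by
  have h0 : μ {ω | ¬ Tendsto (fun j => g j ω) atTop (nhds (f ω))} = 0 := ae_iff.mp h
  have hsub : {ω | ¬ ∃ l, Tendsto (fun j => g j ω) atTop (nhds l)} ⊆
      {ω | ¬ Tendsto (fun j => g j ω) atTop (nhds (f ω))} := fun ω hω h' => hω ⟨_, h'⟩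
  have hnul2 : μ {ω | ¬ ∃ l, Tendsto (fun j => g j ω) atTop (nhds l)} = 0 :=
    le_antisymm ((measure_mono hsub).trans h0.le) (zero_le)
  have htrim : ∀ᵐ ω ∂(μ.trim hle), ∃ l, Tendsto (fun j => g j ω) atTop (nhds l) := by
    rw [ae_iff, trim_measurableSet_eq hle (hnull _ hnul2)]
    exact hnul2
  obtain ⟨flim, hflim_meas, hflim⟩ := measurable_limit_of_tendsto_metrizable_ae
    (fun j => (hg j).aemeasurable) htrim
  have hflim' : ∀ᵐ ω ∂μ, Tendsto (fun j => g j ω) atTop (nhds (flim ω)) := by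
    rw [ae_iff] at hflim ⊢
    exact le_antisymm ((le_trim hle).trans hflim.le) (zero_le)
  have hfe : ∀ᵐ ω ∂μ, f ω = flim ω := by
    filter_upwards [h, hflim'] with ω h1 h2 using tendsto_nhds_unique h1 h2
  exact meas_of_ae_eq_of_null hnull hflim_meas hfe

lemma pred_rect {ℱ : Filtration ℝ m} {t : ℝ} {B : Set ℝ} {C : Set Ω}
    (hBsub : B ⊆ Set.Ioi t) (hB : MeasurableSet B) (hBb : Bornology.IsBounded B)
    (hC : MeasurableSet[ℱ t] C) : MeasurableSet[predictableSigma ℱ] (B ×ˢ C) :=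
  MeasurableSpace.measurableSet_generateFrom ⟨t, B, C, hBsub, hB, hBb, hC, rfl⟩

lemma pred_univ_prod {ℱ : Filtration ℝ m} {C : Set Ω}
    (hC : ∀ t : ℝ, MeasurableSet[ℱ t] C) :
    MeasurableSet[predictableSigma ℱ] ((Set.univ : Set ℝ) ×ˢ C) := by
  have hU : (Set.univ : Set ℝ) ×ˢ C = ⋃ n : ℤ, (Set.Ioc (n : ℝ) (n + 1)) ×ˢ C := by
    ext p
    constructor
    · intro hp
      refine Set.mem_iUnion.mpr ⟨⌈p.1⌉ - 1, Set.mem_prod.mpr ⟨Set.mem_Ioc.mpr ⟨?_, ?_⟩, hp.2⟩⟩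
      · push_cast
        linarith [Int.ceil_lt_add_one p.1]
      · push_cast
        linarith [Int.le_ceil p.1]
    · intro hp
      obtain ⟨n, hn⟩ := Set.mem_iUnion.mp hp
      exact ⟨Set.mem_univ _, hn.2⟩
  rw [hU]
  exact MeasurableSet.iUnion fun n =>
    pred_rect Set.Ioc_subset_Ioi_self measurableSet_Ioc (Metric.isBounded_Ioc _ _) (hC n)

end helperLemmas

/-- if `X` is associated with a consistent family `I` and `X_t → X_{-∞}`
in probability as `t → -∞`, then `X - X_{-∞}` is adapted and associated with `I`, it is
the unique càdlàg process associated with `I` converging to `0` in probability at `-∞`,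
and it is predictable whenever every `ˢI` is predictable. -/
theorem stmt12 {Ω : Type*} {m : MeasurableSpace Ω} {μ : Measure Ω} [IsProbabilityMeasure μ]
    (ℱ : Filtration ℝ m) (hrc : RightContinuousFiltration ℱ) (hcpl : CompleteFiltration ℱ μ)
    (I : ℝ → ℝ → Ω → ℝ) (X : ℝ → Ω → ℝ) (Z : Ω → ℝ)
    (hadapt : ∀ s, Adapted ℱ (I s))
    (hIcad : ∀ s ω, Cadlag fun t => I s t ω)
    (hzero : ∀ s t : ℝ, t ≤ s → ∀ᵐ ω ∂μ, I s t ω = 0)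
    (hcons : ∀ s t u : ℝ, s ≤ t → t ≤ u → ∀ᵐ ω ∂μ, I s t ω + I t u ω = I s u ω)
    (hX : ∀ ω, Cadlag fun t => X t ω) (hXI : Assoc μ I X)
    (hlim : TendstoInMeasure μ (fun t : ℝ => X t) atBot Z) :
    Adapted ℱ (fun t ω => X t ω - Z ω) ∧
    Assoc μ I (fun t ω => X t ω - Z ω) ∧
    (∀ Y : ℝ → Ω → ℝ, (∀ ω, Cadlag fun t => Y t ω) → Assoc μ I Y →
      TendstoInMeasure μ (fun t : ℝ => Y t) atBot (fun _ => 0) →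
      ∀ᵐ ω ∂μ, ∀ t, Y t ω = X t ω - Z ω) ∧
    ((∀ s, PredictableProc ℱ (I s)) → PredictableProc ℱ fun t ω => X t ω - Z ω) := by
  classical
  have hu : Tendsto (fun n : ℕ => -(n : ℝ)) atTop atBot :=
    tendsto_neg_atBot_iff.mpr tendsto_natCast_atTop_atTop
  have hseq : TendstoInMeasure μ (fun n : ℕ => X (-(n : ℝ))) atTop Z :=
    fun ε hε => (hlim ε hε).comp hu
  obtain ⟨ns, hns, hnsae⟩ := hseq.exists_seq_tendsto_ae
  set t : ℕ → ℝ := fun j => -(ns j : ℝ) with ht_def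
  have ht : Tendsto t atTop atBot := hu.comp hns.tendsto_atTop
  have hXt : ∀ᵐ ω ∂μ, Tendsto (fun j => X (t j) ω) atTop (nhds (Z ω)) := hnsae
  have hA : ∀ᵐ ω ∂μ, ∀ j : ℕ, ∀ u : ℝ, X u ω - X (min u (t j)) ω = I (t j) u ω :=
    ae_all_iff.mpr fun j => hXI (t j)
  have hae : ∀ᵐ ω ∂μ, ∀ u : ℝ, Tendsto (fun j => I (t j) u ω) atTop (nhds (X u ω - Z ω)) := by
    filter_upwards [hXt, hA] with ω h1 h2 u
    have h3 : Tendsto (fun j => X u ω - X (t j) ω) atTop (nhds (X u ω - Z ω)) :=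
      tendsto_const_nhds.sub h1
    refine h3.congr' ?_
    filter_upwards [ht.eventually (eventually_le_atBot u)] with j hj
    rw [← h2 j u, min_eq_right hj]
  refine ⟨?_, ?_, ?_, ?_⟩
  · -- Adapted
    intro s
    have hgm : ∀ j, Measurable[ℱ s] fun ω => I (t j) s ω :=
      fun j => hadapt (t j) s
    have hconv : ∀ᵐ ω ∂μ, Tendsto (fun j => I (t j) s ω) atTop (nhds (X s ω - Z ω)) := by
      filter_upwards [hae] with ω h using h s
    exact (meas_of_tendsto_ae_of_null (ℱ.le s) (hcpl s) hgm hconv)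
  · -- Assoc
    intro s
    filter_upwards [hXI s] with ω h u
    have := h u
    show X u ω - Z ω - (X (min u s) ω - Z ω) = I s u ω
    linarith
  · -- uniqueness
    intro Y hYc hYa hY0
    have hYseq : TendstoInMeasure μ (fun j => Y (t j)) atTop (fun _ => 0) :=
      fun ε hε => (hY0 ε hε).comp ht
    obtain ⟨ψ, hψ, hYae⟩ := hYseq.exists_seq_tendsto_ae
    have hr : Tendsto (fun j => t (ψ j)) atTop atBot := ht.comp hψ.tendsto_atTop
    have hB : ∀ᵐ ω ∂μ, ∀ j : ℕ, ∀ u : ℝ, Y u ω - Y (min u (t (ψ j))) ω = I (t (ψ j)) u ω :=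
      ae_all_iff.mpr fun j => hYa (t (ψ j))
    have hA' : ∀ᵐ ω ∂μ, ∀ j : ℕ, ∀ u : ℝ, X u ω - X (min u (t (ψ j))) ω = I (t (ψ j)) u ω :=
      ae_all_iff.mpr fun j => hXI (t (ψ j))
    filter_upwards [hXt, hYae, hB, hA'] with ω h1 h2 h3 h4 u
    have h1' : Tendsto (fun j => X (t (ψ j)) ω) atTop (nhds (Z ω)) := h1.comp hψ.tendsto_atTop
    have h5 : Tendsto (fun j => X u ω - X (t (ψ j)) ω + Y (t (ψ j)) ω) atTop
        (nhds (X u ω - Z ω + 0)) := (tendsto_const_nhds.sub h1').add h2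
    rw [add_zero] at h5
    have h6 : Tendsto (fun _ : ℕ => Y u ω) atTop (nhds (X u ω - Z ω)) := by
      refine h5.congr' ?_
      filter_upwards [hr.eventually (eventually_le_atBot u)] with j hj
      have e3 := h3 j u
      have e4 := h4 j u
      rw [min_eq_right hj] at e3 e4
      linarith
    exact (tendsto_nhds_unique h6 tendsto_const_nhds).symm
  · -- predictability
    intro hp
    set N : Set Ω :=
      {ω | ¬ ∀ u : ℝ, Tendsto (fun j => I (t j) u ω) atTop (nhds (X u ω - Z ω))} with hN
    have hNnull : μ N = 0 := ae_iff.mp hae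
    have hNP : MeasurableSet[predictableSigma ℱ] ((Set.univ : Set ℝ) ×ˢ N) :=
      pred_univ_prod fun u => hcpl u N hNnull
    letI : MeasurableSpace (ℝ × Ω) := predictableSigma ℱ
    show Measurable fun p : ℝ × Ω => X p.1 p.2 - Z p.2
    refine measurable_of_isClosed fun B hB => ?_
    rcases Set.eq_empty_or_nonempty B with rfl | hBne
    · simp
    set A1 : Set (ℝ × Ω) := ⋂ mm : ℕ, ⋃ J : ℕ, ⋂ j : ℕ, ⋂ _ : J ≤ j,
      {p : ℝ × Ω | Metric.infDist (I (t j) p.1 p.2) B ≤ 1 / ((mm : ℝ) + 1)} with hA1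
    set A2 : Set (ℝ × Ω) := ⋂ mm : ℕ, ⋃ k : ℕ, ⋂ q : ℚ,
      ((Set.Ioo ((q : ℝ) - 1 / ((k : ℝ) + 1)) (q : ℝ)) ×ˢ (Set.univ : Set Ω))ᶜ ∪
        (Set.Ioo ((q : ℝ) - 1 / ((k : ℝ) + 1)) (q : ℝ)) ×ˢ
          ({ω | Metric.infDist (X (q : ℝ) ω - Z ω) B ≤ 1 / ((mm : ℝ) + 1)} ∩ N) with hA2
    have hA1m : MeasurableSet[predictableSigma ℱ] A1 := by
      refine MeasurableSet.iInter fun mm => MeasurableSet.iUnion fun J =>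
        MeasurableSet.iInter fun j => MeasurableSet.iInter fun _ => ?_
      have hIm : Measurable[predictableSigma ℱ] fun p : ℝ × Ω =>
          Metric.infDist (I (t j) p.1 p.2) B :=
        (Metric.continuous_infDist_pt B).measurable.comp (hp (t j))
      exact measurableSet_le hIm measurable_const
    have hA2m : MeasurableSet[predictableSigma ℱ] A2 := by
      refine MeasurableSet.iInter fun mm => MeasurableSet.iUnion fun k =>
        MeasurableSet.iInter fun q => MeasurableSet.union ?_ ?_
      · exact (pred_rect Set.Ioo_subset_Ioi_self measurableSet_Ioo
          (Metric.isBounded_Ioo _ _) MeasurableSet.univ).compl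
      · refine pred_rect Set.Ioo_subset_Ioi_self measurableSet_Ioo
          (Metric.isBounded_Ioo _ _) (hcpl _ _ ?_)
        exact le_antisymm ((measure_mono Set.inter_subset_right).trans hNnull.le) (zero_le)
    have hA1iff : ∀ (u : ℝ) (ω : Ω), (u, ω) ∈ A1 ↔ ∀ mm : ℕ, ∃ J : ℕ, ∀ j : ℕ, J ≤ j →
        Metric.infDist (I (t j) u ω) B ≤ 1 / ((mm : ℝ) + 1) := by
      intro u ω
      simp only [hA1, Set.mem_iInter, Set.mem_iUnion, Set.mem_setOf_eq]
    have hA2iff : ∀ (u : ℝ) (ω : Ω), (u, ω) ∈ A2 ↔ ∀ mm : ℕ, ∃ k : ℕ, ∀ q : ℚ,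
        ((q : ℝ) - 1 / ((k : ℝ) + 1) < u ∧ u < (q : ℝ)) →
        (Metric.infDist (X (q : ℝ) ω - Z ω) B ≤ 1 / ((mm : ℝ) + 1) ∧ ω ∈ N) := by
      intro u ω
      simp only [hA2, Set.mem_iInter, Set.mem_iUnion, Set.mem_union, Set.mem_compl_iff,
        Set.mem_prod, Set.mem_univ, and_true, Set.mem_Ioo, Set.mem_inter_iff, Set.mem_setOf_eq]
      refine forall_congr' fun mm => exists_congr fun k => forall_congr' fun q => ?_
      tauto
    have hinf0 : ∀ x : ℝ, (∀ mm : ℕ, Metric.infDist x B ≤ 1 / ((mm : ℝ) + 1)) → x ∈ B := by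
      intro x hx
      rw [hB.mem_iff_infDist_zero hBne]
      refine le_antisymm ?_ Metric.infDist_nonneg
      by_contra hcon
      push_neg at hcon
      obtain ⟨mm, hmm⟩ := exists_nat_one_div_lt hcon
      exact absurd (hx mm) (not_le.mpr hmm)
    have key : (fun p : ℝ × Ω => X p.1 p.2 - Z p.2) ⁻¹' B =
        (A1 ∩ ((Set.univ : Set ℝ) ×ˢ N)ᶜ) ∪ (A2 ∩ ((Set.univ : Set ℝ) ×ˢ N)) := by
      ext ⟨u, ω⟩
      simp only [Set.mem_union, Set.mem_inter_iff, Set.mem_compl_iff, Set.mem_prod,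
        Set.mem_univ, true_and, Set.mem_preimage]
      by_cases hω : ω ∈ N
      · simp only [hω, not_true_eq_false, and_false, and_true, false_or]
        have crc : Tendsto (fun v => X v ω - Z ω) (nhdsWithin u (Set.Ici u))
            (nhds (X u ω - Z ω)) := ((hX ω).1 u).sub tendsto_const_nhds
        rw [hA2iff]
        constructor
        · intro hFB mm
          have hmpos : (0 : ℝ) < 1 / ((mm : ℝ) + 1) := by positivity
          obtain ⟨δ, hδpos, hδ⟩ := Metric.tendsto_nhdsWithin_nhds.mp crc _ hmpos
          obtain ⟨k, hk⟩ := exists_nat_one_div_lt hδpos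
          refine ⟨k, fun q hq => ⟨?_, hω⟩⟩
          have hqIci : (q : ℝ) ∈ Set.Ici u := le_of_lt hq.2
          have hdq : dist (q : ℝ) u < δ := by
            rw [Real.dist_eq, abs_of_pos (sub_pos.mpr hq.2)]
            linarith [hq.1]
          have hd := hδ hqIci hdq
          calc Metric.infDist (X (q : ℝ) ω - Z ω) B
              ≤ Metric.infDist (X u ω - Z ω) B + dist (X (q : ℝ) ω - Z ω) (X u ω - Z ω) :=
                Metric.infDist_le_infDist_add_dist
            _ = dist (X (q : ℝ) ω - Z ω) (X u ω - Z ω) := by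
                rw [Metric.infDist_zero_of_mem hFB, zero_add]
            _ ≤ 1 / ((mm : ℝ) + 1) := le_of_lt hd
        · intro h
          refine hinf0 _ fun mm => ?_
          obtain ⟨k, hk⟩ := h mm
          refine le_of_forall_pos_le_add fun η hη => ?_
          obtain ⟨δ, hδpos, hδ⟩ := Metric.tendsto_nhdsWithin_nhds.mp crc η hη
          have hkpos : (0 : ℝ) < 1 / ((k : ℝ) + 1) := by positivity
          obtain ⟨q, hq1, hq2⟩ := exists_rat_btwn
            (lt_add_of_pos_right u (lt_min hδpos hkpos))
          have hmin1 : (q : ℝ) < u + δ :=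
            lt_of_lt_of_le hq2 (add_le_add_right (min_le_left _ _) u)
          have hmin2 : (q : ℝ) < u + 1 / ((k : ℝ) + 1) :=
            lt_of_lt_of_le hq2 (add_le_add_right (min_le_right _ _) u)
          have hmem := hk q ⟨by linarith, hq1⟩
          have hdq : dist (q : ℝ) u < δ := by
            rw [Real.dist_eq, abs_of_pos (sub_pos.mpr hq1)]
            linarith
          have hd := hδ (le_of_lt hq1) hdq
          calc Metric.infDist (X u ω - Z ω) B
              ≤ Metric.infDist (X (q : ℝ) ω - Z ω) B
                  + dist (X u ω - Z ω) (X (q : ℝ) ω - Z ω) :=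
                Metric.infDist_le_infDist_add_dist
            _ ≤ 1 / ((mm : ℝ) + 1) + η := by
                rw [dist_comm]
                exact add_le_add hmem.1 (le_of_lt hd)
      · simp only [hω, not_false_eq_true, and_true, and_false, or_false]
        have hconv : ∀ v : ℝ, Tendsto (fun j => I (t j) v ω) atTop (nhds (X v ω - Z ω)) := by
          by_contra hc
          exact hω hc
        rw [hA1iff]
        constructor
        · intro hFB mm
          have hmpos : (0 : ℝ) < 1 / ((mm : ℝ) + 1) := by positivity
          obtain ⟨J, hJ⟩ := (Metric.tendsto_atTop.mp (hconv u)) _ hmpos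
          refine ⟨J, fun j hj => ?_⟩
          calc Metric.infDist (I (t j) u ω) B
              ≤ Metric.infDist (X u ω - Z ω) B + dist (I (t j) u ω) (X u ω - Z ω) :=
                Metric.infDist_le_infDist_add_dist
            _ = dist (I (t j) u ω) (X u ω - Z ω) := by
                rw [Metric.infDist_zero_of_mem hFB, zero_add]
            _ ≤ 1 / ((mm : ℝ) + 1) := le_of_lt (hJ j hj)
        · intro h
          refine hinf0 _ fun mm => ?_
          obtain ⟨J, hJ⟩ := h mm
          have hlim2 : Tendsto (fun j => Metric.infDist (I (t j) u ω) B) atTop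
              (nhds (Metric.infDist (X u ω - Z ω) B)) :=
            ((Metric.continuous_infDist_pt B).tendsto _).comp (hconv u)
          exact le_of_tendsto hlim2 (eventually_atTop.mpr ⟨J, hJ⟩)
    show MeasurableSet[predictableSigma ℱ] ((fun p : ℝ × Ω => X p.1 p.2 - Z p.2) ⁻¹' B)
    rw [key]
    exact (hA1m.inter hNP.compl).union (hA2m.inter hNP)
end
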